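/- Let p ≥ 3 be prime and θ ∈ ℚ_p with |θ − 1|_p = 1/p. Let ĥ = (ĥ_i)_{i≥1} be a sequence in ℚ_p with |ĥ_1 + 1|_p ≤ 1/p², |ĥ_i|_p ≤ 1/p² for all i ≥ 2, and |ĥ_i|_p → 0; put X := Σ_{j≥2} ĥ_j. Then |ĥ_1 + X + θ|_p = 1/p, and for every i ≥ 2, |((θ−1)ĥ_i + ĥ_1 + X + 1)/(ĥ_1 + X + θ)|_p ≤ 1/p. (Consequently these ratios cannot be written as p-adic exponentials exp_p(κ), since |exp_p(κ)|_p = 1; hence the associated measure μ₋ is a strictly generalized p-adic Gibbs measure.) -/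

import Mathlib

open Filter

/-- Let `p ≥ 3` be prime, `θ ∈ ℚ_p` with `|θ-1|_p = 1/p`, and
let `ĥ = (ĥ_i)_{i≥1}` be a sequence in `ℚ_p` with `|ĥ₁ + 1|_p ≤ 1/p²`,
`|ĥ_i|_p ≤ 1/p²` for all `i ≥ 2`, `|ĥ_i|_p → 0`; put `X = Σ_{j≥2} ĥ_j`.
Then `|ĥ₁ + X + θ|_p = 1/p` and, for every `i ≥ 2`,
`|((θ-1)ĥ_i + ĥ₁ + X + 1)/(ĥ₁ + X + θ)|_p ≤ 1/p`
(hence these ratios are not `p`-adic exponentials, and the associated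
measure `μ₋` is a strictly generalized `p`-adic Gibbs measure). -/
theorem potts_minus_measure_not_Gibbs (p : ℕ) [Fact p.Prime] (hp : 3 ≤ p)
    (θ : ℚ_[p]) (hθ : ‖θ - 1‖ = 1 / (p : ℝ))
    (h : ℕ → ℚ_[p])
    (hh1 : ‖h 1 + 1‖ ≤ 1 / (p : ℝ) ^ 2)
    (hhB : ∀ i, 2 ≤ i → ‖h i‖ ≤ 1 / (p : ℝ) ^ 2)
    (hhten : Tendsto (fun i => ‖h i‖) atTop (nhds 0))
    (X : ℚ_[p]) (hX : X = ∑' j : ℕ, h (j + 2)) :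
    ‖h 1 + X + θ‖ = 1 / (p : ℝ) ∧
    ∀ i, 2 ≤ i →
      ‖((θ - 1) * h i + h 1 + X + 1) / (h 1 + X + θ)‖ ≤ 1 / (p : ℝ) := by
  have hp1 : (1 : ℝ) < (p : ℝ) := by exact_mod_cast lt_of_lt_of_le (by norm_num) hp
  have hp0 : (0 : ℝ) < (p : ℝ) := lt_trans one_pos hp1
  have hq : (0 : ℝ) ≤ 1 / (p : ℝ) ^ 2 := by positivity
  have hqlt : 1 / (p : ℝ) ^ 2 < 1 / (p : ℝ) := by
    rw [div_lt_div_iff₀ (by positivity) hp0]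
    nlinarith
  -- bound on X
  have hXb : ‖X‖ ≤ 1 / (p : ℝ) ^ 2 := by
    rw [hX]
    exact IsUltrametricDist.norm_tsum_le_of_forall_le_of_nonneg hq
      (fun j => hhB (j + 2) (by omega))
  -- bound on (h 1 + 1) + X
  have hkey : ‖h 1 + 1 + X‖ ≤ 1 / (p : ℝ) ^ 2 :=
    le_trans (Padic.nonarchimedean _ _) (max_le hh1 hXb)
  -- first claim
  have habs : h 1 + X + θ = (h 1 + 1 + X) + (θ - 1) := by ring
  have h1 : ‖h 1 + X + θ‖ = 1 / (p : ℝ) := by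
    rw [habs, Padic.add_eq_max_of_ne (by rw [hθ]; exact ne_of_lt (lt_of_le_of_lt hkey hqlt)),
      hθ]
    exact max_eq_right (le_of_lt (lt_of_le_of_lt hkey hqlt))
  refine ⟨h1, fun i hi => ?_⟩
  have hnum : ‖(θ - 1) * h i + h 1 + X + 1‖ ≤ 1 / (p : ℝ) ^ 2 := by
    have : (θ - 1) * h i + h 1 + X + 1 = (θ - 1) * h i + (h 1 + 1 + X) := by ring
    rw [this]
    refine le_trans (Padic.nonarchimedean _ _) (max_le ?_ hkey)
    calc ‖(θ - 1) * h i‖ = ‖θ - 1‖ * ‖h i‖ := Padic.padicNormE.mul _ _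
      _ ≤ 1 * (1 / (p : ℝ) ^ 2) := by
          refine mul_le_mul ?_ (hhB i hi) (norm_nonneg _) one_pos.le
          rw [hθ]; exact le_of_lt (by rw [div_lt_one hp0] at *; linarith [hp1])
      _ = 1 / (p : ℝ) ^ 2 := one_mul _
  rw [norm_div, h1, div_le_div_iff₀ (by positivity) hp0]
  calc ‖(θ - 1) * h i + h 1 + X + 1‖ * (p : ℝ) ≤ 1 / (p : ℝ) ^ 2 * (p : ℝ) :=
        mul_le_mul_of_nonneg_right hnum hp0.le
    _ = 1 / (p : ℝ) := by field_simp
    _ ≤ 1 * (1 / (p : ℝ)) := le_of_eq (one_mul _).symm
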